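/- For 0 ≤ p ≤ 1 and integers k, n with k ≤ pn, the partial binomial sum satisfies Σ_{i=0}^{k} C(n,i) p^i (1-p)^{n-i} ≤ exp(-(k - pn)^2 / (2pn)). -/

import Mathlib

open Finset Real

lemma exp_neg_le_quadratic (t : ℝ) (ht : 0 ≤ t) :
    Real.exp (-t) ≤ 1 - t + t ^ 2 / 2 := by
  have h : ∀ x ∈ Set.Ici (0:ℝ), 0 ≤ deriv (fun x : ℝ => 1 - x + x ^ 2 / 2 - Real.exp (-x)) x := by
    intro x hx
    have : deriv (fun x : ℝ => 1 - x + x ^ 2 / 2 - Real.exp (-x)) x = -1 + x + Real.exp (-x) := by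
      have h1 : HasDerivAt (fun x : ℝ => 1 - x + x ^ 2 / 2 - Real.exp (-x))
          (-1 + x + Real.exp (-x)) x := by
        have e1 : HasDerivAt (fun x : ℝ => Real.exp (-x)) (-Real.exp (-x)) x := by
          simpa [Function.comp_def] using (Real.hasDerivAt_exp (-x)).comp x (hasDerivAt_neg x)
        have e2 : HasDerivAt (fun x : ℝ => 1 - x + x ^ 2 / 2) (-1 + x) x := by
          have := ((hasDerivAt_pow 2 x).div_const 2)
          have := ((hasDerivAt_const x (1:ℝ)).sub (hasDerivAt_id x)).add this
          refine HasDerivAt.congr_deriv this ?_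
          ring
        exact (e2.sub e1).congr_deriv (by ring)
      exact h1.deriv
    rw [this]
    have := Real.add_one_le_exp (-x)
    linarith
  have hm : MonotoneOn (fun x : ℝ => 1 - x + x ^ 2 / 2 - Real.exp (-x)) (Set.Ici 0) := by
    apply monotoneOn_of_deriv_nonneg (convex_Ici 0)
    · exact Continuous.continuousOn (by continuity)
    · exact (Differentiable.differentiableOn (by fun_prop)).mono interior_subset
    · intro x hx
      exact h x (interior_subset hx)
  have := hm (Set.self_mem_Ici) ht ht
  simp at this
  linarith

theorem binomial_lower_tail (p : ℝ) (hp0 : 0 ≤ p) (hp1 : p ≤ 1) (k n : ℕ)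
    (hk : (k : ℝ) ≤ p * n) :
    ∑ i ∈ Finset.range (k + 1), (n.choose i : ℝ) * p ^ i * (1 - p) ^ (n - i) ≤
      Real.exp (-((k : ℝ) - p * n) ^ 2 / (2 * p * n)) := by
  have hq : (0:ℝ) ≤ 1 - p := by linarith
  have hkn : k ≤ n := by
    have : (k:ℝ) ≤ n := le_trans hk (by nlinarith [Nat.cast_nonneg (α := ℝ) n])
    exact_mod_cast this
  by_cases hpn : p * n = 0
  · have hk0 : k = 0 := by
      have : (k:ℝ) ≤ 0 := by rw [← hpn]; exact hk
      exact_mod_cast le_antisymm (by exact_mod_cast this) (Nat.zero_le k)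
    subst hk0
    rw [Finset.sum_range_one]
    simp only [Nat.choose_zero_right, Nat.cast_one, pow_zero, Nat.cast_zero, Nat.sub_zero,
      one_mul]
    have h1 : (1 - p) ^ n ≤ 1 := pow_le_one₀ hq (by linarith)
    have h2 : -((0:ℝ) - p * n) ^ 2 / (2 * p * n) = 0 := by
      rw [hpn]; ring
    rw [h2, Real.exp_zero]
    exact h1
  · have hpn' : 0 < p * n := lt_of_le_of_ne (mul_nonneg hp0 (Nat.cast_nonneg n)) (Ne.symm hpn)
    obtain ⟨hp', hn'⟩ | ⟨hx1, hx2⟩ := mul_pos_iff.mp hpn'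
    swap
    · exact absurd hx2 (not_lt.mpr (Nat.cast_nonneg n))
    set t : ℝ := (p * n - k) / (p * n) with ht_def
    have ht0 : 0 ≤ t := div_nonneg (by linarith) hpn'.le
    -- Step 1: insert exponential weights and extend the range
    have step1 : ∑ i ∈ Finset.range (k + 1), (n.choose i : ℝ) * p ^ i * (1 - p) ^ (n - i) ≤
        ∑ i ∈ Finset.range (n + 1),
          Real.exp (t * ((k:ℝ) - i)) * ((n.choose i : ℝ) * p ^ i * (1 - p) ^ (n - i)) := by
      have hA : ∀ i ∈ Finset.range (k + 1),
          (n.choose i : ℝ) * p ^ i * (1 - p) ^ (n - i) ≤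
          Real.exp (t * ((k:ℝ) - i)) * ((n.choose i : ℝ) * p ^ i * (1 - p) ^ (n - i)) := by
        intro i hi
        have hik : (i:ℝ) ≤ k := by
          have := Finset.mem_range.mp hi; exact_mod_cast Nat.lt_succ_iff.mp this
        have h1 : (1:ℝ) ≤ Real.exp (t * ((k:ℝ) - i)) := by
          rw [Real.one_le_exp_iff]; exact mul_nonneg ht0 (by linarith)
        have h2 : 0 ≤ (n.choose i : ℝ) * p ^ i * (1 - p) ^ (n - i) :=
          mul_nonneg (mul_nonneg (Nat.cast_nonneg _) (pow_nonneg hp0 _)) (pow_nonneg hq _)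
        nlinarith
      refine le_trans (Finset.sum_le_sum hA) ?_
      apply Finset.sum_le_sum_of_subset_of_nonneg
      · exact Finset.range_subset_range.mpr (by omega)
      · intro i _ _
        exact mul_nonneg (Real.exp_nonneg _)
          (mul_nonneg (mul_nonneg (Nat.cast_nonneg _) (pow_nonneg hp0 _)) (pow_nonneg hq _))
    -- Step 2: evaluate via binomial theorem
    have step2 : ∑ i ∈ Finset.range (n + 1),
          Real.exp (t * ((k:ℝ) - i)) * ((n.choose i : ℝ) * p ^ i * (1 - p) ^ (n - i)) =
        Real.exp (t * k) * (p * Real.exp (-t) + (1 - p)) ^ n := by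
      rw [add_pow, Finset.mul_sum]
      apply Finset.sum_congr rfl
      intro i _
      rw [mul_pow, ← Real.exp_nat_mul]
      have : Real.exp (t * ((k:ℝ) - i)) = Real.exp (t * k) * Real.exp ((i:ℝ) * (-t)) := by
        rw [← Real.exp_add]; ring_nf
      rw [this]; ring
    -- Step 3: bound the base
    have hbase : p * Real.exp (-t) + (1 - p) ≤ Real.exp (p * (-t + t ^ 2 / 2)) := by
      have h1 : p * Real.exp (-t) + (1 - p) ≤ 1 + p * (-t + t ^ 2 / 2) := by
        have := exp_neg_le_quadratic t ht0
        nlinarith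
      exact le_trans h1 (by have := Real.add_one_le_exp (p * (-t + t ^ 2 / 2)); linarith)
    have hbase0 : 0 ≤ p * Real.exp (-t) + (1 - p) :=
      add_nonneg (mul_nonneg hp0 (Real.exp_nonneg _)) hq
    have step3 : (p * Real.exp (-t) + (1 - p)) ^ n ≤ Real.exp ((n:ℝ) * (p * (-t + t ^ 2 / 2))) := by
      calc (p * Real.exp (-t) + (1 - p)) ^ n ≤ Real.exp (p * (-t + t ^ 2 / 2)) ^ n :=
            pow_le_pow_left₀ hbase0 hbase n
        _ = Real.exp ((n:ℝ) * (p * (-t + t ^ 2 / 2))) := by rw [← Real.exp_nat_mul]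
    -- Step 4: combine and identify the exponent
    have step4 : Real.exp (t * k) * Real.exp ((n:ℝ) * (p * (-t + t ^ 2 / 2))) =
        Real.exp (-((k : ℝ) - p * n) ^ 2 / (2 * p * n)) := by
      rw [← Real.exp_add]
      congr 1
      rw [ht_def]
      field_simp [ne_of_gt hp', ne_of_gt hn']
      ring
    calc ∑ i ∈ Finset.range (k + 1), (n.choose i : ℝ) * p ^ i * (1 - p) ^ (n - i)
        ≤ Real.exp (t * k) * (p * Real.exp (-t) + (1 - p)) ^ n := by rw [← step2]; exact step1
      _ ≤ Real.exp (t * k) * Real.exp ((n:ℝ) * (p * (-t + t ^ 2 / 2))) :=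
          mul_le_mul_of_nonneg_left step3 (Real.exp_nonneg _)
      _ = _ := step4
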